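/- Let H < 1/2 and 0 < t ≤ T. For every integer r ≥ 1 there is a constant C such that for all n ≥ 2 and all integers 0 ≤ k ≤ ⌊nt⌋, the sum over j = 0 to ⌊nt⌋ - 1 of |E[ΔB_{j/n} ΔB_{k/n}]|^r is at most C n^{-2rH}. Consequently the double sum over 0 ≤ j,k ≤ ⌊nt⌋ - 1 of |E[ΔB_{j/n} ΔB_{k/n}]|^r is at most C ⌊nt⌋ n^{-2rH}. -/

import Mathlib

open MeasureTheory

open Real in
/-- subadditivity of rpow for exponents ≤ 1 -/
lemma my_add_rpow_le {p u v : ℝ} (hp : 0 ≤ p) (hp1 : p ≤ 1) (hu : 0 ≤ u) (hv : 0 ≤ v) :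
    (u + v) ^ p ≤ u ^ p + v ^ p := by
  lift u to NNReal using hu
  lift v to NNReal using hv
  have := NNReal.rpow_add_le_add_rpow u v hp hp1
  exact_mod_cast this

lemma my_rpow_sub_le {p : ℝ} (hp0 : 0 < p) (hp1 : p ≤ 1) {a b : ℝ} (h : |b| ≤ |a|) :
    |a| ^ p - |b| ^ p ≤ |a - b| ^ p := by
  have h1 : |a| = |b| + (|a| - |b|) := by ring
  have h2 : |a| ^ p ≤ |b| ^ p + (|a| - |b|) ^ p := by
    have h4 := my_add_rpow_le hp0.le hp1 (abs_nonneg b) (sub_nonneg.2 h)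
    rwa [show |b| + (|a| - |b|) = |a| by ring] at h4
  have h3 : (|a| - |b|) ^ p ≤ |a - b| ^ p :=
    Real.rpow_le_rpow (by linarith) (abs_sub_abs_le_abs_sub a b) hp0.le
  linarith

lemma my_abs_rpow_sub_abs_rpow {p : ℝ} (hp0 : 0 < p) (hp1 : p ≤ 1) (a b : ℝ) :
    |(|a| ^ p - |b| ^ p)| ≤ |a - b| ^ p := by
  rcases le_total (|b|) (|a|) with h | h
  · rw [abs_of_nonneg (by nlinarith [Real.rpow_le_rpow (abs_nonneg b) h hp0.le])]
    exact my_rpow_sub_le hp0 hp1 h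
  · rw [abs_of_nonpos (by nlinarith [Real.rpow_le_rpow (abs_nonneg a) h hp0.le]), abs_sub_comm]
    linarith [my_rpow_sub_le hp0 hp1 h]

noncomputable def myRho (p x : ℝ) : ℝ := |x + 1| ^ p + |x - 1| ^ p - 2 * |x| ^ p

lemma myRho_abs_le {p : ℝ} (hp0 : 0 < p) (hp1 : p ≤ 1) (x : ℝ) : |myRho p x| ≤ 2 := by
  have h1 := my_abs_rpow_sub_abs_rpow hp0 hp1 (x + 1) x
  have h2 := my_abs_rpow_sub_abs_rpow hp0 hp1 (x - 1) x
  simp only [add_sub_cancel_left, sub_sub_cancel_left, abs_one, abs_neg, Real.one_rpow] at h1 h2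
  unfold myRho
  have e1 : |x + 1| ^ p + |x - 1| ^ p - 2 * |x| ^ p
      = (|x + 1| ^ p - |x| ^ p) + (|x - 1| ^ p - |x| ^ p) := by ring
  rw [e1]
  have hb : |(|x+1|^p - |x|^p) + (|x-1|^p - |x|^p)| ≤ |(|x+1|^p - |x|^p)| + |(|x-1|^p - |x|^p)| :=
    abs_add_le _ _
  linarith

lemma myRho_nonpos {p : ℝ} (hp0 : 0 < p) (hp1 : p ≤ 1) {x : ℝ} (hx : 1 ≤ |x|) :
    myRho p x ≤ 0 := by
  have key : ∀ y : ℝ, 1 ≤ y → myRho p y ≤ 0 := by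
    intro y hy
    have hc := (Real.concaveOn_rpow hp0.le hp1).2 (Set.mem_Ici.2 (by linarith : (0:ℝ) ≤ y - 1))
      (Set.mem_Ici.2 (by linarith : (0:ℝ) ≤ y + 1)) (by norm_num : (0:ℝ) ≤ 1/2)
      (by norm_num : (0:ℝ) ≤ 1/2) (by norm_num)
    simp only [smul_eq_mul] at hc
    have e : (1/2 : ℝ) * (y - 1) + 1/2 * (y + 1) = y := by ring
    rw [e] at hc
    unfold myRho
    rw [abs_of_nonneg (by linarith : (0:ℝ) ≤ y + 1),
        abs_of_nonneg (by linarith : (0:ℝ) ≤ y - 1),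
        abs_of_nonneg (by linarith : (0:ℝ) ≤ y)]
    linarith
  rcases le_total 0 x with h | h
  · rw [abs_of_nonneg h] at hx; exact key x hx
  · rw [abs_of_nonpos h] at hx
    have := key (-x) hx
    unfold myRho at this ⊢
    rw [show -x + 1 = -(x - 1) by ring, show -x - 1 = -(x + 1) by ring, abs_neg, abs_neg,
        abs_neg] at this
    linarith

lemma myRho_zero {p : ℝ} (hp0 : 0 < p) : myRho p 0 = 2 := by
  unfold myRho
  simp [Real.zero_rpow hp0.ne']
  norm_num

lemma my_cov_eq {Ω : Type*} [MeasurableSpace Ω] (μ : Measure Ω)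
    (H : ℝ) (B : ℝ → Ω → ℝ)
    (hint : ∀ s u : ℝ, Integrable (fun ω => B s ω * B u ω) μ)
    (hcov : ∀ s u : ℝ, 0 ≤ s → 0 ≤ u →
      ∫ ω, B s ω * B u ω ∂μ = (s ^ (2*H) + u ^ (2*H) - |u - s| ^ (2*H)) / 2)
    {n : ℕ} (hn : 0 < n) (j k : ℕ) :
    ∫ ω, (B (((j:ℝ)+1)/n) ω - B ((j:ℝ)/n) ω) * (B (((k:ℝ)+1)/n) ω - B ((k:ℝ)/n) ω) ∂μ
      = ((|((k:ℝ)-j) + 1| ^ (2*H) + |((k:ℝ)-j) - 1| ^ (2*H) - 2 * |(k:ℝ)-j| ^ (2*H)) / 2)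
        * (((n:ℝ) ^ (2*H))⁻¹) := by
  have hn' : (0:ℝ) < n := by exact_mod_cast hn
  have key : (fun ω => (B (((j:ℝ)+1)/n) ω - B ((j:ℝ)/n) ω)
        * (B (((k:ℝ)+1)/n) ω - B ((k:ℝ)/n) ω))
      = fun ω => (B (((j:ℝ)+1)/n) ω * B (((k:ℝ)+1)/n) ω
          - B (((j:ℝ)+1)/n) ω * B ((k:ℝ)/n) ω)
        - (B ((j:ℝ)/n) ω * B (((k:ℝ)+1)/n) ω - B ((j:ℝ)/n) ω * B ((k:ℝ)/n) ω) := by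
    funext ω; ring
  have h1 : (0:ℝ) ≤ ((j:ℝ)+1)/n := by positivity
  have h2 : (0:ℝ) ≤ ((k:ℝ)+1)/n := by positivity
  have h3 : (0:ℝ) ≤ (k:ℝ)/n := by positivity
  have h4 : (0:ℝ) ≤ (j:ℝ)/n := by positivity
  have i1 : Integrable (fun ω => B (((j:ℝ)+1)/n) ω * B (((k:ℝ)+1)/n) ω
      - B (((j:ℝ)+1)/n) ω * B ((k:ℝ)/n) ω) μ := (hint _ _).sub (hint _ _)
  have i2 : Integrable (fun ω => B ((j:ℝ)/n) ω * B (((k:ℝ)+1)/n) ω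
      - B ((j:ℝ)/n) ω * B ((k:ℝ)/n) ω) μ := (hint _ _).sub (hint _ _)
  rw [key, integral_sub i1 i2,
      integral_sub (hint _ _) (hint _ _), integral_sub (hint _ _) (hint _ _),
      hcov _ _ h1 h2, hcov _ _ h1 h3, hcov _ _ h4 h2, hcov _ _ h4 h3]
  have d1 : (((k:ℝ)+1)/n - ((j:ℝ)+1)/n) = ((k:ℝ)-j)/n := by ring
  have d2 : ((k:ℝ)/n - ((j:ℝ)+1)/n) = (((k:ℝ)-j) - 1)/n := by ring
  have d3 : (((k:ℝ)+1)/n - (j:ℝ)/n) = (((k:ℝ)-j) + 1)/n := by ring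
  have d4 : ((k:ℝ)/n - (j:ℝ)/n) = ((k:ℝ)-j)/n := by ring
  rw [d1, d2, d3, d4]
  have habs : ∀ x : ℝ, |x / n| ^ (2*H) = |x| ^ (2*H) * ((n:ℝ) ^ (2*H))⁻¹ := by
    intro x
    rw [abs_div, abs_of_pos hn', Real.div_rpow (abs_nonneg x) hn'.le, div_eq_mul_inv]
  rw [habs, habs, habs]
  ring

/-- Lemma 2.6(c): for fBm with `H < 1/2` and `0 < t ≤ T`, for each `r ≥ 1` there
is `C` such that for all `n ≥ 2` and all `0 ≤ k ≤ ⌊nt⌋`,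
`∑_{j=0}^{⌊nt⌋-1} |E[ΔB_{j/n} ΔB_{k/n}]|^r ≤ C n^{-2rH}`, and consequently the
double sum is at most `C ⌊nt⌋ n^{-2rH}`. -/
theorem fbm_sum_increment_increment_covariance_power_bound
    {Ω : Type*} [MeasurableSpace Ω] (μ : Measure Ω) [IsProbabilityMeasure μ]
    (H : ℝ) (hH0 : 0 < H) (hH1 : H < 1/2) (T t : ℝ) (ht : 0 < t) (htT : t ≤ T)
    (B : ℝ → Ω → ℝ)
    (hint : ∀ s u : ℝ, Integrable (fun ω => B s ω * B u ω) μ)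
    (hcov : ∀ s u : ℝ, 0 ≤ s → 0 ≤ u →
      ∫ ω, B s ω * B u ω ∂μ = (s ^ (2*H) + u ^ (2*H) - |u - s| ^ (2*H)) / 2)
    (r : ℕ) (hr : 1 ≤ r) :
    ∃ C : ℝ, 0 < C ∧ ∀ n : ℕ, 2 ≤ n →
      (∀ k : ℕ, k ≤ ⌊(n:ℝ)*t⌋₊ →
        ∑ j ∈ Finset.range ⌊(n:ℝ)*t⌋₊,
          |∫ ω, (B (((j:ℝ)+1)/n) ω - B ((j:ℝ)/n) ω)
              * (B (((k:ℝ)+1)/n) ω - B ((k:ℝ)/n) ω) ∂μ| ^ r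
          ≤ C * (n : ℝ) ^ (-(2*(r:ℝ)*H))) ∧
      ∑ j ∈ Finset.range ⌊(n:ℝ)*t⌋₊, ∑ k ∈ Finset.range ⌊(n:ℝ)*t⌋₊,
          |∫ ω, (B (((j:ℝ)+1)/n) ω - B ((j:ℝ)/n) ω)
              * (B (((k:ℝ)+1)/n) ω - B ((k:ℝ)/n) ω) ∂μ| ^ r
        ≤ C * (⌊(n:ℝ)*t⌋₊ : ℝ) * (n : ℝ) ^ (-(2*(r:ℝ)*H)) := by
  have hp0 : (0:ℝ) < 2*H := by linarith
  have hp1 : 2*H ≤ 1 := by linarith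
  refine ⟨3, by norm_num, fun n hn => ?_⟩
  have hn0 : 0 < n := by omega
  have hn' : (0:ℝ) < n := by exact_mod_cast hn0
  set N := ⌊(n:ℝ)*t⌋₊ with hN
  set inv : ℝ := ((n:ℝ) ^ (2*H))⁻¹ with hinv
  have hinvpos : 0 < inv := by rw [hinv]; positivity
  -- |E j k| rewritten via myRho
  have hEeq : ∀ j k : ℕ,
      |∫ ω, (B (((j:ℝ)+1)/n) ω - B ((j:ℝ)/n) ω)
          * (B (((k:ℝ)+1)/n) ω - B ((k:ℝ)/n) ω) ∂μ|
      = |myRho (2*H) ((k:ℝ)-j)| / 2 * inv := by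
    intro j k
    rw [my_cov_eq μ H B hint hcov hn0 j k]
    rw [abs_mul, abs_div, abs_of_pos hinvpos, abs_two]
    rfl
  -- power of inv
  have hpow : inv ^ r = (n:ℝ) ^ (-(2*(r:ℝ)*H)) := by
    rw [hinv, ← Real.rpow_neg hn'.le,
        ← Real.rpow_natCast ((n:ℝ) ^ (-(2*H))) r, ← Real.rpow_mul hn'.le]
    congr 1
    ring
  -- core summability: for every k, the sum of |myRho| is at most 6
  have hsum6 : ∀ k : ℕ, ∑ j ∈ Finset.range N, |myRho (2*H) ((k:ℝ)-j)| ≤ 6 := by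
    intro k
    set h : ℕ → ℝ := fun j => |(k:ℝ) - j + 1| ^ (2*H) - |(k:ℝ) - j| ^ (2*H) with hh
    have htel : ∑ j ∈ Finset.range N, myRho (2*H) ((k:ℝ)-j) = h 0 - h N := by
      rw [← Finset.sum_range_sub' h N]
      refine Finset.sum_congr rfl fun j _ => ?_
      simp only [hh, myRho]
      push_cast
      ring_nf
    have hb : ∀ j : ℕ, |h j| ≤ 1 := by
      intro j
      have := my_abs_rpow_sub_abs_rpow hp0 hp1 ((k:ℝ) - j + 1) ((k:ℝ) - j)
      rw [show (k:ℝ) - j + 1 - ((k:ℝ) - j) = 1 by ring] at this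
      simpa [hh] using this
    have hpt : ∀ j ∈ Finset.range N,
        |myRho (2*H) ((k:ℝ)-j)| ≤ -(myRho (2*H) ((k:ℝ)-j)) + (if j = k then (4:ℝ) else 0) := by
      intro j _
      by_cases hjk : j = k
      · subst hjk
        simp [myRho_zero hp0]
        norm_num
      · have hone : 1 ≤ |(k:ℝ) - j| := by
          have hz : ((k:ℝ) - j) = (((k:ℤ) - j : ℤ) : ℝ) := by push_cast; ring
          rw [hz, ← Int.cast_abs]
          have : (1:ℤ) ≤ |(k:ℤ) - j| := Int.one_le_abs (sub_ne_zero.2 (by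
            exact_mod_cast Ne.symm hjk))
          exact_mod_cast this
        have hneg := myRho_nonpos hp0 hp1 hone
        rw [abs_of_nonpos hneg, if_neg hjk]
        linarith
    calc ∑ j ∈ Finset.range N, |myRho (2*H) ((k:ℝ)-j)|
        ≤ ∑ j ∈ Finset.range N,
            (-(myRho (2*H) ((k:ℝ)-j)) + (if j = k then (4:ℝ) else 0)) :=
          Finset.sum_le_sum hpt
      _ = -(h 0 - h N) + ∑ j ∈ Finset.range N, (if j = k then (4:ℝ) else 0) := by
          rw [Finset.sum_add_distrib, Finset.sum_neg_distrib, htel]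
      _ ≤ -(h 0 - h N) + 4 := by
          have : ∑ j ∈ Finset.range N, (if j = k then (4:ℝ) else 0)
              = if k ∈ Finset.range N then (4:ℝ) else 0 := Finset.sum_ite_eq' _ _ _
          rw [this]; split <;> norm_num
      _ ≤ 6 := by
          have h0 := hb 0; have hNb := hb N
          have := abs_le.1 h0; have := abs_le.1 hNb
          cases abs_le.1 h0; cases abs_le.1 hNb
          linarith
  -- per-k bound
  have main : ∀ k : ℕ,
      ∑ j ∈ Finset.range N,
        |∫ ω, (B (((j:ℝ)+1)/n) ω - B ((j:ℝ)/n) ω)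
            * (B (((k:ℝ)+1)/n) ω - B ((k:ℝ)/n) ω) ∂μ| ^ r
      ≤ 3 * (n:ℝ) ^ (-(2*(r:ℝ)*H)) := by
    intro k
    have step1 : ∀ j : ℕ,
        |∫ ω, (B (((j:ℝ)+1)/n) ω - B ((j:ℝ)/n) ω)
            * (B (((k:ℝ)+1)/n) ω - B ((k:ℝ)/n) ω) ∂μ| ^ r
        ≤ (|myRho (2*H) ((k:ℝ)-j)| / 2) * inv ^ r := by
      intro j
      rw [hEeq j k, mul_pow]
      have ha0 : 0 ≤ |myRho (2*H) ((k:ℝ)-j)| / 2 := by positivity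
      have ha1 : |myRho (2*H) ((k:ℝ)-j)| / 2 ≤ 1 := by
        rw [div_le_one (by norm_num : (0:ℝ) < 2)]
        exact myRho_abs_le hp0 hp1 _
      have := pow_le_of_le_one ha0 ha1 (by omega : r ≠ 0)
      exact mul_le_mul_of_nonneg_right this (by positivity)
    calc ∑ j ∈ Finset.range N,
          |∫ ω, (B (((j:ℝ)+1)/n) ω - B ((j:ℝ)/n) ω)
              * (B (((k:ℝ)+1)/n) ω - B ((k:ℝ)/n) ω) ∂μ| ^ r
        ≤ ∑ j ∈ Finset.range N, (|myRho (2*H) ((k:ℝ)-j)| / 2) * inv ^ r :=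
          Finset.sum_le_sum fun j _ => step1 j
      _ = (∑ j ∈ Finset.range N, |myRho (2*H) ((k:ℝ)-j)|) / 2 * inv ^ r := by
          rw [← Finset.sum_mul, Finset.sum_div]
      _ ≤ 6 / 2 * inv ^ r := by
          apply mul_le_mul_of_nonneg_right _ (by positivity)
          apply div_le_div_of_nonneg_right ?_ ?_
          · exact hsum6 k
          · norm_num
      _ = 3 * (n:ℝ) ^ (-(2*(r:ℝ)*H)) := by rw [hpow]; norm_num
  refine ⟨fun k _ => main k, ?_⟩
  rw [Finset.sum_comm]
  calc ∑ k ∈ Finset.range N, ∑ j ∈ Finset.range N,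
        |∫ ω, (B (((j:ℝ)+1)/n) ω - B ((j:ℝ)/n) ω)
            * (B (((k:ℝ)+1)/n) ω - B ((k:ℝ)/n) ω) ∂μ| ^ r
      ≤ ∑ _k ∈ Finset.range N, 3 * (n:ℝ) ^ (-(2*(r:ℝ)*H)) :=
        Finset.sum_le_sum fun k _ => main k
    _ = (N:ℝ) * (3 * (n:ℝ) ^ (-(2*(r:ℝ)*H))) := by
        rw [Finset.sum_const, Finset.card_range, nsmul_eq_mul]
    _ = 3 * (N:ℝ) * (n:ℝ) ^ (-(2*(r:ℝ)*H)) := by ring
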